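/- Let H be a complex Hilbert space with dim H = ℵ₀, let K(H) be the C*-algebra of compact operators on H, let {ξ_i : i ∈ ℕ} be an orthonormal basis for H, and let W be a Hilbert C*-module over K(H) with an orthonormal basis {w_i : i ∈ ℕ} satisfying ⟨w_i, w_i⟩ = ξ_i ⊗ ξ_i for all i ∈ ℕ. Then for every a ∈ K(H), the series Σ_{i=1}^∞ w_i a converges in W, and ⟨Σ_{i=1}^∞ w_i a, Σ_{i=1}^∞ w_i a⟩ = a*a. -/

import Mathlib

open Metric ContinuousLinearMap in
/-- **Schauder's theorem** for Hilbert space: the adjoint of a compact operator is compact. -/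
theorem IsCompactOperator.star_clm {H : Type*} [NormedAddCommGroup H] [InnerProductSpace ℂ H]
    [CompleteSpace H] {f : H →L[ℂ] H} (hf : IsCompactOperator f) :
    IsCompactOperator ⇑(star f) := by
  have hA : IsCompactOperator ⇑(f ∘L (star f)) := by
    exact hf.comp_clm (star f)
  have goal_iff := isCompactOperator_iff_isCompact_closure_image_closedBall
    ((star f : H →L[ℂ] H) : H →ₗ[ℂ] H) zero_lt_one
  refine goal_iff.mpr (isCompact_iff_totallyBounded_isComplete.mpr ⟨?_, isClosed_closure.isComplete⟩)
  refine TotallyBounded.closure ?_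
  rw [Metric.totallyBounded_iff]
  intro ε hε
  set A := f ∘L (star f) with hAdef
  have hAtb : TotallyBounded (⇑A '' closedBall 0 1) := by
    have h1 := (isCompactOperator_iff_isCompact_closure_image_closedBall
      ((A : H →L[ℂ] H) : H →ₗ[ℂ] H) zero_lt_one).mp hA
    exact h1.totallyBounded.subset subset_closure
  obtain ⟨t, htsub, htfin, hcov⟩ := totallyBounded_iff_subset.mp hAtb
      {p : H × H | dist p.1 p.2 < ε ^ 2 / 8} (Metric.dist_mem_uniformity (by positivity))
  -- choose preimages of the centers
  have hchoice : ∀ y ∈ t, ∃ u ∈ closedBall (0 : H) 1, A u = y := fun y hy => by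
    obtain ⟨u, hu, hu'⟩ := htsub hy
    exact ⟨u, hu, hu'⟩
  classical
  choose u hu hAu using hchoice
  refine ⟨(fun y => if hy : y ∈ t then star f (u y hy) else 0) '' t, htfin.image _, ?_⟩
  rintro w ⟨x, hx, rfl⟩
  obtain ⟨y, hy, hdy⟩ : ∃ y ∈ t, dist (A x) y < ε ^ 2 / 8 := by
    have := hcov ⟨x, hx, rfl⟩
    simp only [Set.mem_iUnion, Set.mem_setOf_eq] at this
    obtain ⟨y, hy, hd⟩ := this
    exact ⟨y, hy, hd⟩
  simp only [Set.mem_iUnion, mem_ball]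
  refine ⟨star f (u y hy), ⟨y, hy, by simp [hy]⟩, ?_⟩
  -- estimate
  set z := x - u y hy with hz
  have hznorm : ‖z‖ ≤ 2 := by
    have h1 : ‖x‖ ≤ 1 := by simpa using hx
    have h2 : ‖u y hy‖ ≤ 1 := by simpa using hu y hy
    calc ‖z‖ ≤ ‖x‖ + ‖u y hy‖ := norm_sub_le _ _
    _ ≤ 2 := by linarith
  have hAz : ‖A z‖ < ε ^ 2 / 8 := by
    have : A z = A x - y := by rw [hz, map_sub, hAu y hy]
    rw [this, ← dist_eq_norm]
    exact hdy
  have hkey : ‖star f z‖ ^ 2 ≤ ‖z‖ * ‖A z‖ := by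
    have h1 : ‖star f z‖ ^ 2 = RCLike.re (inner ℂ (star f z) (star f z)) := by
      exact norm_sq_eq_re_inner (𝕜 := ℂ) _
    have h2 : inner ℂ (star f z) (star f z) = inner ℂ z (A z) := by
      rw [star_eq_adjoint]
      rw [adjoint_inner_left]
      rfl
    have h3 : RCLike.re (inner ℂ z (A z)) ≤ ‖inner ℂ z (A z)‖ := RCLike.re_le_norm _
    have h4 : ‖inner ℂ z (A z)‖ ≤ ‖z‖ * ‖A z‖ := norm_inner_le_norm _ _
    rw [h1, h2]
    exact h3.trans h4
  have hfz : ‖star f z‖ ^ 2 < ε ^ 2 / 4 := by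
    have hAz0 : 0 ≤ ‖A z‖ := norm_nonneg _
    nlinarith [hkey, hznorm, hAz, norm_nonneg z]
  have : dist (star f x) (star f (u y hy)) = ‖star f z‖ := by
    rw [dist_eq_norm, ← map_sub, hz]
  show dist ((star f) x) ((star f) (u y hy)) < ε
  rw [this]
  nlinarith [norm_nonneg ((star f) z), hfz, hε]

noncomputable section

variable (H : Type*) [NormedAddCommGroup H] [InnerProductSpace ℂ H] [CompleteSpace H]

/-- The compact operators on the Hilbert space `H`, as a non-unital star subalgebra
of `H →L[ℂ] H`. -/
def compactStarAlgebra : NonUnitalStarSubalgebra ℂ (H →L[ℂ] H) where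
  carrier := {T : H →L[ℂ] H | IsCompactOperator T}
  add_mem' hf hg := hf.add hg
  zero_mem' := isCompactOperator_zero
  smul_mem' c _ hf := hf.smul c
  mul_mem' {f g} hf _ := by simpa [Function.comp_def] using hf.comp_clm g
  star_mem' {f} hf := hf.star_clm

/-- `K(H)`, the C*-algebra of compact operators on the Hilbert space `H`. -/
abbrev KH := ↥(compactStarAlgebra H)

instance : CStarRing (KH H) where
  norm_mul_self_le x := by simpa using CStarRing.norm_mul_self_le (x : H →L[ℂ] H)

instance : CompleteSpace (KH H) :=
  (isClosed_setOf_isCompactOperator (σ₁₂ := RingHom.id ℂ) (M₁ := H) (M₂ := H)).completeSpace_coe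

variable {H}

/-- The rank one operator `ξ ⊗ η : ν ↦ (ν, η)ξ` (inner product linear in the first slot,
i.e. `(ν, η) = ⟪η, ν⟫` in Mathlib's convention). -/
def rankOneOp (ξ η : H) : H →L[ℂ] H := (innerSL ℂ η).smulRight ξ

set_option linter.unusedSectionVars false in
theorem isCompactOperator_rankOneOp (ξ η : H) : IsCompactOperator ⇑(rankOneOp ξ η) := by
  refine (isCompactOperator_iff_image_closedBall_subset_compact
    ((rankOneOp ξ η : H →L[ℂ] H) : H →ₗ[ℂ] H) zero_lt_one).mpr ?_
  refine ⟨(fun c : ℂ => c • ξ) '' Metric.closedBall 0 ‖η‖,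
    (isCompact_closedBall 0 ‖η‖).image (by fun_prop), ?_⟩
  rintro x ⟨ν, hν, rfl⟩
  refine ⟨inner ℂ η ν, ?_, rfl⟩
  simp only [Metric.mem_closedBall, dist_zero_right] at hν ⊢
  calc ‖inner ℂ η ν‖ ≤ ‖η‖ * ‖ν‖ := norm_inner_le_norm η ν
  _ ≤ ‖η‖ := by nlinarith [norm_nonneg (η : H)]

/-- The rank one operator `ξ ⊗ η` as an element of `K(H)`. -/
def KH.rankOne (ξ η : H) : KH H := ⟨rankOneOp ξ η, isCompactOperator_rankOneOp ξ η⟩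

/-- A Hilbert C*-module structure on `W` over a C*-algebra `A`: a right `A`-action `smul`
and an `A`-valued inner product `inner` satisfying the usual axioms, whose induced norm
`‖⟨x,x⟩‖ ^ (1/2)` coincides with the (complete) norm of `W`.  Positivity `⟨x,x⟩ ≥ 0` is
encoded through its C*-algebraic characterization `∃ b, ⟨x,x⟩ = b* ⬝ b`. -/
structure HilbertModule (A : Type*) (W : Type*)
    [NonUnitalNormedRing A] [StarRing A] [CStarRing A] [NormedSpace ℂ A]
    [IsScalarTower ℂ A A] [SMulCommClass ℂ A A] [StarModule ℂ A] [CompleteSpace A]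
    [NormedAddCommGroup W] [NormedSpace ℂ W] [CompleteSpace W] : Type _ where
  smul : W → A → W
  inner : W → W → A
  add_smul' : ∀ x y a, smul (x + y) a = smul x a + smul y a
  smul_add' : ∀ x a b, smul x (a + b) = smul x a + smul x b
  smul_assoc' : ∀ x a b, smul (smul x a) b = smul x (a * b)
  smul_complex₁ : ∀ (c : ℂ) x a, smul (c • x) a = c • smul x a
  smul_complex₂ : ∀ (c : ℂ) x a, smul x (c • a) = c • smul x a
  inner_add_left : ∀ x y z, inner (x + y) z = inner x z + inner y z
  inner_add_right : ∀ x y z, inner x (y + z) = inner x y + inner x z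
  inner_smul_right : ∀ x y a, inner x (smul y a) = inner x y * a
  inner_smul_complex : ∀ (c : ℂ) x y, inner x (c • y) = c • inner x y
  star_inner : ∀ x y, star (inner x y) = inner y x
  inner_self_nonneg : ∀ x, ∃ a, inner x x = star a * a
  inner_self_eq_zero : ∀ x, inner x x = 0 ↔ x = 0
  norm_sq_eq : ∀ x, ‖x‖ ^ 2 = ‖inner x x‖

/-- A minimal projection in an algebra `A`: a nonzero self-adjoint idempotent `e`
with `e ⬝ A ⬝ e = ℂ ⬝ e`. -/
def IsMinimalProjection {A : Type*} [NonUnitalNormedRing A] [StarRing A] [NormedSpace ℂ A]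
    (e : A) : Prop :=
  star e = e ∧ e * e = e ∧ e ≠ 0 ∧ ∀ a : A, ∃ c : ℂ, e * a * e = c • e

/-- An orthonormal basis `{w i}` of a Hilbert C*-module: each `⟨wᵢ, wᵢ⟩` is a minimal
projection, `⟨wᵢ, wⱼ⟩ = 0` for `i ≠ j`, and the submodule generated by the `wᵢ`
is dense in `W`. -/
def HilbertModule.IsOrthonormalBasis {A W : Type*}
    [NonUnitalNormedRing A] [StarRing A] [CStarRing A] [NormedSpace ℂ A]
    [IsScalarTower ℂ A A] [SMulCommClass ℂ A A] [StarModule ℂ A] [CompleteSpace A]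
    [NormedAddCommGroup W] [NormedSpace ℂ W] [CompleteSpace W]
    (M : HilbertModule A W) {ι : Type*} (w : ι → W) : Prop :=
  (∀ i, IsMinimalProjection (M.inner (w i) (w i))) ∧
  (∀ i j, i ≠ j → M.inner (w i) (w j) = 0) ∧
  closure (↑(Submodule.span ℂ
      (Set.range w ∪ {x | ∃ (i : ι) (a : A), M.smul (w i) a = x})) : Set W) = Set.univ

section ModuleAux

set_option linter.unusedSectionVars false

variable {A W : Type*}
    [NonUnitalNormedRing A] [StarRing A] [CStarRing A] [NormedSpace ℂ A]
    [IsScalarTower ℂ A A] [SMulCommClass ℂ A A] [StarModule ℂ A] [CompleteSpace A]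
    [NormedAddCommGroup W] [NormedSpace ℂ W] [CompleteSpace W]
    (M : HilbertModule A W)

theorem HilbertModule.inner_zero_right' (x : W) : M.inner x 0 = 0 := by
  have h := M.inner_add_right x 0 0
  rw [add_zero] at h
  exact left_eq_add.mp h

theorem HilbertModule.inner_zero_left' (y : W) : M.inner 0 y = 0 := by
  rw [← M.star_inner, M.inner_zero_right', star_zero]

theorem HilbertModule.inner_neg_right' (x y : W) : M.inner x (-y) = -M.inner x y := by
  rw [← neg_one_smul ℂ y, M.inner_smul_complex, neg_one_smul ℂ]

theorem HilbertModule.inner_sub_right' (x y z : W) :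
    M.inner x (y - z) = M.inner x y - M.inner x z := by
  rw [sub_eq_add_neg, M.inner_add_right, M.inner_neg_right', sub_eq_add_neg]

theorem HilbertModule.inner_neg_left' (x y : W) : M.inner (-x) y = -M.inner x y := by
  rw [← M.star_inner, M.inner_neg_right', star_neg, M.star_inner]

theorem HilbertModule.inner_sub_left' (x y z : W) :
    M.inner (x - y) z = M.inner x z - M.inner y z := by
  rw [sub_eq_add_neg, M.inner_add_left, M.inner_neg_left', sub_eq_add_neg]

theorem HilbertModule.inner_smul_left_complex (c : ℂ) (x y : W) :
    M.inner (c • x) y = star c • M.inner x y := by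
  rw [← M.star_inner, M.inner_smul_complex, star_smul, M.star_inner]

theorem HilbertModule.inner_smul_left_op (x y : W) (a : A) :
    M.inner (M.smul x a) y = star a * M.inner x y := by
  rw [← M.star_inner, M.inner_smul_right, star_mul, M.star_inner]

theorem HilbertModule.inner_sum_left' {ι : Type*} (s : Finset ι) (f : ι → W) (y : W) :
    M.inner (∑ i ∈ s, f i) y = ∑ i ∈ s, M.inner (f i) y := by
  classical
  induction s using Finset.induction_on with
  | empty => simpa using M.inner_zero_left' y
  | @insert _ _ h ih => rw [Finset.sum_insert h, M.inner_add_left, ih, Finset.sum_insert h]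

theorem HilbertModule.inner_sum_right' {ι : Type*} (s : Finset ι) (f : ι → W) (x : W) :
    M.inner x (∑ i ∈ s, f i) = ∑ i ∈ s, M.inner x (f i) := by
  rw [← M.star_inner, M.inner_sum_left' s f x, star_sum]
  exact Finset.sum_congr rfl fun i _ => M.star_inner _ _

theorem HilbertModule.norm_inner_le_four (x y : W) :
    ‖M.inner x y‖ ≤ 4 * (‖x‖ * ‖y‖) := by
  have hq : ∀ x y : W, ‖M.inner x y‖ ≤ (‖x‖ + ‖y‖) ^ 2 := by
    intro x y
    have expand : ∀ c : ℂ, M.inner (x + c • y) (x + c • y)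
        = M.inner x x + c • M.inner x y + star c • M.inner y x
          + (c * star c) • M.inner y y := by
      intro c
      simp only [M.inner_add_left, M.inner_add_right, M.inner_smul_complex,
        M.inner_smul_left_complex, smul_smul]
      abel
    have hpol : (4 : ℂ) • M.inner x y
        = M.inner (x + (1 : ℂ) • y) (x + (1 : ℂ) • y)
          + (-Complex.I) • M.inner (x + Complex.I • y) (x + Complex.I • y)
          + (-1 : ℂ) • M.inner (x + (-1 : ℂ) • y) (x + (-1 : ℂ) • y)
          + Complex.I • M.inner (x + (-Complex.I) • y) (x + (-Complex.I) • y) := by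
      rw [expand 1, expand Complex.I, expand (-1 : ℂ), expand (-Complex.I)]
      simp only [star_one, star_neg, Complex.star_def, Complex.conj_I, one_smul, neg_neg,
        smul_add, smul_smul, mul_one, one_mul, mul_neg, neg_mul, Complex.I_mul_I, neg_smul,
        smul_neg]
      module
    have hterm : ∀ c : ℂ, ‖c‖ = 1 → ‖M.inner (x + c • y) (x + c • y)‖ ≤ (‖x‖ + ‖y‖) ^ 2 := by
      intro c hc
      rw [← M.norm_sq_eq]
      have h1 : ‖x + c • y‖ ≤ ‖x‖ + ‖y‖ := by
        refine (norm_add_le _ _).trans ?_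
        rw [norm_smul, hc, one_mul]
      exact pow_le_pow_left₀ (norm_nonneg _) h1 2
    have n1 : ‖M.inner (x + (1 : ℂ) • y) (x + (1 : ℂ) • y)‖ ≤ (‖x‖ + ‖y‖) ^ 2 :=
      hterm 1 (by norm_num)
    have n2 : ‖(-Complex.I) • M.inner (x + Complex.I • y) (x + Complex.I • y)‖
        ≤ (‖x‖ + ‖y‖) ^ 2 := by
      rw [norm_smul]; simpa using hterm Complex.I (by simp)
    have n3 : ‖(-1 : ℂ) • M.inner (x + (-1 : ℂ) • y) (x + (-1 : ℂ) • y)‖ ≤ (‖x‖ + ‖y‖) ^ 2 := by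
      rw [norm_smul]; simpa using hterm (-1) (by norm_num)
    have n4 : ‖Complex.I • M.inner (x + (-Complex.I) • y) (x + (-Complex.I) • y)‖
        ≤ (‖x‖ + ‖y‖) ^ 2 := by
      rw [norm_smul]; simpa using hterm (-Complex.I) (by simp)
    have hb : ‖(4 : ℂ) • M.inner x y‖ ≤ 4 * (‖x‖ + ‖y‖) ^ 2 := by
      rw [hpol]
      refine le_trans (norm_add_le _ _) ?_
      refine le_trans (add_le_add (norm_add_le _ _) n4) ?_
      refine le_trans (add_le_add (add_le_add (norm_add_le _ _) n3) le_rfl) ?_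
      refine le_trans (add_le_add (add_le_add (add_le_add n1 n2) le_rfl) le_rfl) ?_
      linarith
    have h4 : ‖(4 : ℂ) • M.inner x y‖ = 4 * ‖M.inner x y‖ := by
      rw [norm_smul]; norm_num
    rw [h4] at hb
    linarith
  rcases eq_or_ne x 0 with rfl | hx
  · rw [M.inner_zero_left']
    simp only [norm_zero]
    positivity
  rcases eq_or_ne y 0 with rfl | hy
  · rw [M.inner_zero_right']
    simp only [norm_zero]
    positivity
  have hxp : 0 < ‖x‖ := norm_pos_iff.mpr hx
  have hyp : 0 < ‖y‖ := norm_pos_iff.mpr hy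
  set t : ℝ := Real.sqrt (‖y‖ / ‖x‖) with ht
  have htp : 0 < t := Real.sqrt_pos.mpr (by positivity)
  have ht2 : t ^ 2 = ‖y‖ / ‖x‖ := Real.sq_sqrt (by positivity)
  have hkey : M.inner x y = M.inner ((t : ℂ) • x) (((t⁻¹ : ℝ) : ℂ) • y) := by
    have hc : ((t⁻¹ : ℝ) : ℂ) * star ((t : ℝ) : ℂ) = 1 := by
      rw [Complex.star_def, Complex.conj_ofReal]
      norm_cast
      exact inv_mul_cancel₀ (ne_of_gt htp)
    rw [M.inner_smul_complex, M.inner_smul_left_complex, smul_smul, hc, one_smul]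
  rw [hkey]
  refine (hq _ _).trans ?_
  have h1 : ‖(t : ℂ) • x‖ = t * ‖x‖ := by
    rw [norm_smul, Complex.norm_real, Real.norm_eq_abs, abs_of_pos htp]
  have h2 : ‖((t⁻¹ : ℝ) : ℂ) • y‖ = t⁻¹ * ‖y‖ := by
    rw [norm_smul, Complex.norm_real, Real.norm_eq_abs, abs_of_pos (inv_pos.mpr htp)]
  rw [h1, h2]
  have heq : t⁻¹ * ‖y‖ = t * ‖x‖ := by
    have hyx : ‖y‖ = t ^ 2 * ‖x‖ := by
      rw [ht2]; field_simp
    rw [hyx]; field_simp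
  rw [heq]
  have hfin : (t * ‖x‖ + t * ‖x‖) ^ 2 = 4 * (t ^ 2 * ‖x‖ ^ 2) := by ring
  rw [hfin, ht2]
  have : ‖y‖ / ‖x‖ * ‖x‖ ^ 2 = ‖x‖ * ‖y‖ := by
    field_simp
  rw [this]

end ModuleAux

section OpAux

open Filter

variable {H : Type*} [NormedAddCommGroup H] [InnerProductSpace ℂ H] [CompleteSpace H]

local notation "⟪" x ", " y "⟫" => @inner ℂ _ _ x y

theorem rankOneOp_apply' (ζ η v : H) : rankOneOp ζ η v = ⟪η, v⟫ • ζ := rfl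

theorem star_rankOneOp (ζ : H) : star (rankOneOp ζ ζ) = rankOneOp ζ ζ := by
  rw [ContinuousLinearMap.star_eq_adjoint]
  symm
  rw [ContinuousLinearMap.eq_adjoint_iff]
  intro u v
  simp only [rankOneOp_apply', inner_smul_left, inner_smul_right, inner_conj_symm]
  ring

theorem rankOneOp_mul_rankOneOp (ξ : HilbertBasis ℕ ℂ H) (i j : ℕ) :
    rankOneOp (ξ i) (ξ i) * rankOneOp (ξ j) (ξ j)
      = if i = j then rankOneOp (ξ i) (ξ i) else 0 := by
  have horto := orthonormal_iff_ite.mp ξ.orthonormal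
  ext v
  rw [ContinuousLinearMap.mul_apply]
  by_cases h : i = j
  · subst h
    simp [rankOneOp_apply', inner_smul_right, horto i i, smul_smul, ξ.orthonormal.1 i]
  · simp [rankOneOp_apply', inner_smul_right, horto i j, h]

theorem projOp_apply (ξ : HilbertBasis ℕ ℂ H) (n : ℕ) (u : H) :
    (∑ i ∈ Finset.range n, rankOneOp (ξ i) (ξ i)) u
      = ∑ i ∈ Finset.range n, ⟪ξ i, u⟫ • ξ i := by
  simp only [ContinuousLinearMap.sum_apply, rankOneOp_apply']

theorem projOp_norm_sub_le (ξ : HilbertBasis ℕ ℂ H) (n : ℕ) (u : H) :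
    ‖u - (∑ i ∈ Finset.range n, rankOneOp (ξ i) (ξ i)) u‖ ≤ ‖u‖ := by
  set p := (∑ i ∈ Finset.range n, rankOneOp (ξ i) (ξ i)) u with hp
  have hpe : p = ∑ i ∈ Finset.range n, ⟪ξ i, u⟫ • ξ i := projOp_apply ξ n u
  have horth : ⟪p, u - p⟫ = 0 := by
    have h1 : ⟪p, u⟫ = ∑ i ∈ Finset.range n, (starRingEnd ℂ) ⟪ξ i, u⟫ * ⟪ξ i, u⟫ := by
      rw [hpe, sum_inner]
      exact Finset.sum_congr rfl fun i _ => inner_smul_left _ _ _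
    have h2 : ⟪p, p⟫ = ∑ i ∈ Finset.range n, (starRingEnd ℂ) ⟪ξ i, u⟫ * ⟪ξ i, u⟫ := by
      rw [hpe, sum_inner]
      refine Finset.sum_congr rfl fun i hi => ?_
      rw [inner_smul_left, ξ.orthonormal.inner_right_sum _ hi]
    rw [inner_sub_right, h1, h2, sub_self]
  have hpyth : ‖u‖ ^ 2 = ‖p‖ ^ 2 + ‖u - p‖ ^ 2 := by
    have hsum : p + (u - p) = u := by abel
    have hns := @norm_add_sq ℂ _ _ _ _ p (u - p)
    rw [hsum, horth] at hns
    simpa using hns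
  nlinarith [norm_nonneg (u - p), norm_nonneg u, sq_nonneg ‖p‖]

theorem tendsto_projOp_comp (ξ : HilbertBasis ℕ ℂ H) {a : H →L[ℂ] H}
    (ha : IsCompactOperator ⇑a) :
    Filter.Tendsto (fun n => (∑ i ∈ Finset.range n, rankOneOp (ξ i) (ξ i)) ∘L a)
      Filter.atTop (nhds a) := by
  set P : ℕ → H →L[ℂ] H := fun n => ∑ i ∈ Finset.range n, rankOneOp (ξ i) (ξ i) with hP
  have hpt : ∀ u : H, Filter.Tendsto (fun n => P n u) Filter.atTop (nhds u) := by
    intro u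
    have hfe : (fun n => P n u) = fun n => ∑ i ∈ Finset.range n, ξ.repr u i • ξ i := by
      funext n
      rw [hP]
      simp only
      rw [projOp_apply]
      exact Finset.sum_congr rfl fun i _ => by rw [ξ.repr_apply_apply]
    rw [hfe]
    exact (ξ.hasSum_repr u).tendsto_sum_nat
  rw [Metric.tendsto_atTop]
  intro ε hε
  have hK : IsCompact (closure (⇑a '' Metric.closedBall 0 1)) :=
    (isCompactOperator_iff_isCompact_closure_image_closedBall
      ((a : H →L[ℂ] H) : H →ₗ[ℂ] H) zero_lt_one).mp ha
  have htb : TotallyBounded (⇑a '' Metric.closedBall 0 1) :=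
    hK.totallyBounded.subset subset_closure
  obtain ⟨t, htfin, htsub⟩ := Metric.totallyBounded_iff.mp htb (ε / 4) (by positivity)
  have hev : ∀ᶠ n in Filter.atTop, ∀ y ∈ t, ‖P n y - y‖ < ε / 4 := by
    rw [Filter.eventually_all_finite htfin]
    intro y _
    have hty : Filter.Tendsto (fun n => ‖P n y - y‖) Filter.atTop (nhds 0) := by
      have := ((hpt y).sub_const y).norm
      simpa using this
    exact hty.eventually_lt_const (by positivity)
  obtain ⟨N, hN⟩ := Filter.eventually_atTop.mp hev
  refine ⟨N, fun n hn => ?_⟩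
  have hball : ∀ v : H, ‖v‖ ≤ 1 → ‖P n (a v) - a v‖ ≤ ε / 4 + ε / 4 := by
    intro v hv
    obtain ⟨y, hy, hyd⟩ : ∃ y ∈ t, dist (a v) y < ε / 4 := by
      have hmem : a v ∈ ⇑a '' Metric.closedBall 0 1 :=
        ⟨v, by simpa using hv, rfl⟩
      have := htsub hmem
      simpa using this
    have hdecomp : P n (a v) - a v = (P n (a v - y) - (a v - y)) + (P n y - y) := by
      rw [map_sub]; abel
    rw [hdecomp]
    refine (norm_add_le _ _).trans (add_le_add ?_ (le_of_lt (hN n hn y hy)))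
    rw [norm_sub_rev]
    refine (projOp_norm_sub_le ξ n _).trans ?_
    rw [← dist_eq_norm]
    exact le_of_lt hyd
  have hop : ‖P n ∘L a - a‖ ≤ ε / 2 := by
    refine ContinuousLinearMap.opNorm_le_bound _ (by positivity) fun v => ?_
    rcases eq_or_ne v 0 with rfl | hv0
    · simp
    · have hvn : (0 : ℝ) < ‖v‖ := norm_pos_iff.mpr hv0
      set v' : H := ((‖v‖⁻¹ : ℝ) : ℂ) • v with hv'
      have hv'n : ‖v'‖ ≤ 1 := by
        rw [hv', norm_smul, Complex.norm_real, Real.norm_eq_abs,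
          abs_of_pos (inv_pos.mpr hvn), inv_mul_cancel₀ (ne_of_gt hvn)]
      have hvv : ((‖v‖ : ℝ) : ℂ) • v' = v := by
        have hone : ((‖v‖ : ℝ) : ℂ) * ((‖v‖⁻¹ : ℝ) : ℂ) = 1 := by
          norm_cast
          exact mul_inv_cancel₀ (ne_of_gt hvn)
        rw [hv', smul_smul, hone, one_smul]
      have hcalc : ‖(P n ∘L a - a) v‖ = ‖v‖ * ‖(P n ∘L a - a) v'‖ := by
        conv_lhs => rw [← hvv]
        rw [map_smul, norm_smul, Complex.norm_real, Real.norm_eq_abs,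
          abs_of_pos hvn]
      rw [hcalc]
      have hbv := hball v' hv'n
      have : ‖(P n ∘L a - a) v'‖ ≤ ε / 4 + ε / 4 := by
        simpa [ContinuousLinearMap.sub_apply, ContinuousLinearMap.comp_apply] using hbv
      calc ‖v‖ * ‖(P n ∘L a - a) v'‖ ≤ ‖v‖ * (ε / 4 + ε / 4) := by
            exact mul_le_mul_of_nonneg_left this (le_of_lt hvn)
        _ = ε / 2 * ‖v‖ := by ring
  rw [dist_eq_norm]
  calc ‖P n ∘L a - a‖ ≤ ε / 2 := hop
    _ < ε := by linarith

theorem KH.coe_rankOne (ζ η : H) : ((KH.rankOne ζ η : KH H) : H →L[ℂ] H) = rankOneOp ζ η := rfl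

theorem KH.star_rankOne (ζ : H) : star (KH.rankOne ζ ζ) = KH.rankOne ζ ζ :=
  Subtype.ext (star_rankOneOp ζ)

theorem KH.rankOne_mul_rankOne (ξ : HilbertBasis ℕ ℂ H) (i j : ℕ) :
    KH.rankOne (ξ i) (ξ i) * KH.rankOne (ξ j) (ξ j)
      = if i = j then KH.rankOne (ξ i) (ξ i) else 0 := by
  by_cases h : i = j
  · subst h
    rw [if_pos rfl]
    exact Subtype.ext (by simpa [KH.coe_rankOne] using rankOneOp_mul_rankOneOp ξ i i)
  · rw [if_neg h]
    exact Subtype.ext (by simpa [h, KH.coe_rankOne] using rankOneOp_mul_rankOneOp ξ i j)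

end OpAux

set_option maxHeartbeats 1600000 in
/-- Remark 4.2.
Let `dim H = ℵ₀` with orthonormal basis `{ξ i : i ∈ ℕ}`, and let `W` be a Hilbert
C*-module over `K(H)` with an orthonormal basis `{w i : i ∈ ℕ}` such that
`⟨w i, w i⟩ = ξ i ⊗ ξ i`.  Then for every `a ∈ K(H)` the series `∑ᵢ (w i) ⬝ a` converges
in `W`, and its sum `L` satisfies `⟨L, L⟩ = a* ⬝ a`. -/
theorem summable_basis_smul_and_inner_self
    {H : Type*} [NormedAddCommGroup H] [InnerProductSpace ℂ H] [CompleteSpace H]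
    {W : Type*} [NormedAddCommGroup W] [NormedSpace ℂ W] [CompleteSpace W]
    (M : HilbertModule (KH H) W)
    (ξ : HilbertBasis ℕ ℂ H)
    (w : ℕ → W) (hw : M.IsOrthonormalBasis w)
    (hmatch : ∀ i : ℕ, M.inner (w i) (w i) = KH.rankOne (ξ i) (ξ i))
    (a : KH H) :
    ∃ L : W,
      Filter.Tendsto (fun n : ℕ => ∑ i ∈ Finset.range n, M.smul (w i) a)
        Filter.atTop (nhds L) ∧
      M.inner L L = star a * a := by
  classical
  obtain ⟨-, horth, -⟩ := hw
  set e : ℕ → KH H := fun i => KH.rankOne (ξ i) (ξ i) with he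
  have hestar : ∀ i, star (e i) = e i := fun i => KH.star_rankOne (ξ i)
  have hemul : ∀ i j, e i * e j = if i = j then e i else 0 := fun i j =>
    KH.rankOne_mul_rankOne ξ i j
  have hEstar : ∀ s : Finset ℕ, star (∑ i ∈ s, e i) = ∑ i ∈ s, e i := by
    intro s
    rw [star_sum]
    exact Finset.sum_congr rfl fun i _ => hestar i
  have hEmul : ∀ s : Finset ℕ, (∑ i ∈ s, e i) * (∑ i ∈ s, e i) = ∑ i ∈ s, e i := by
    intro s
    rw [Finset.sum_mul]
    calc ∑ i ∈ s, e i * ∑ j ∈ s, e j = ∑ i ∈ s, ∑ j ∈ s, e i * e j :=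
          Finset.sum_congr rfl fun i _ => Finset.mul_sum _ _ _
      _ = ∑ i ∈ s, e i := by
          refine Finset.sum_congr rfl fun i hi => ?_
          calc ∑ j ∈ s, e i * e j = ∑ j ∈ s, (if i = j then e i else 0) :=
                Finset.sum_congr rfl fun j _ => hemul i j
            _ = e i := by rw [Finset.sum_ite_eq]; exact if_pos hi
  have hinner_TT : ∀ s : Finset ℕ,
      M.inner (∑ i ∈ s, M.smul (w i) a) (∑ i ∈ s, M.smul (w i) a)
        = star ((∑ i ∈ s, e i) * a) * ((∑ i ∈ s, e i) * a) := by
    intro s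
    have lhs : M.inner (∑ i ∈ s, M.smul (w i) a) (∑ i ∈ s, M.smul (w i) a)
        = star a * ((∑ i ∈ s, e i) * a) := by
      rw [M.inner_sum_left']
      calc ∑ i ∈ s, M.inner (M.smul (w i) a) (∑ j ∈ s, M.smul (w j) a)
          = ∑ i ∈ s, ∑ j ∈ s, M.inner (M.smul (w i) a) (M.smul (w j) a) :=
            Finset.sum_congr rfl fun i _ => M.inner_sum_right' _ _ _
        _ = ∑ i ∈ s, ∑ j ∈ s, star a * M.inner (w i) (w j) * a := by
            refine Finset.sum_congr rfl fun i _ => Finset.sum_congr rfl fun j _ => ?_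
            rw [M.inner_smul_right, M.inner_smul_left_op]
        _ = ∑ i ∈ s, ∑ j ∈ s, (if i = j then star a * e i * a else 0) := by
            refine Finset.sum_congr rfl fun i _ => Finset.sum_congr rfl fun j _ => ?_
            by_cases h : i = j
            · subst h; rw [if_pos rfl, hmatch i]
            · rw [horth i j h, if_neg h, mul_zero, zero_mul]
        _ = ∑ i ∈ s, star a * e i * a := by
            refine Finset.sum_congr rfl fun i hi => ?_
            rw [Finset.sum_ite_eq]; exact if_pos hi
        _ = star a * ((∑ i ∈ s, e i) * a) := by
            rw [Finset.sum_mul, Finset.mul_sum]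
            exact Finset.sum_congr rfl fun i _ => mul_assoc _ _ _
    have rhs : star ((∑ i ∈ s, e i) * a) * ((∑ i ∈ s, e i) * a)
        = star a * ((∑ i ∈ s, e i) * a) := by
      rw [star_mul, hEstar, mul_assoc, ← mul_assoc (∑ i ∈ s, e i), hEmul]
    rw [lhs, rhs]
  have hnorm : ∀ s : Finset ℕ,
      ‖∑ i ∈ s, M.smul (w i) a‖ = ‖(∑ i ∈ s, e i) * a‖ := by
    intro s
    have h1 : ‖∑ i ∈ s, M.smul (w i) a‖ ^ 2 = ‖(∑ i ∈ s, e i) * a‖ ^ 2 := by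
      rw [M.norm_sq_eq, hinner_TT s, sq]
      exact CStarRing.norm_star_mul_self
    have h2 := congrArg Real.sqrt h1
    rwa [Real.sqrt_sq (norm_nonneg _), Real.sqrt_sq (norm_nonneg _)] at h2
  set S : ℕ → W := fun n => ∑ i ∈ Finset.range n, M.smul (w i) a with hS
  set Q : ℕ → KH H := fun n => (∑ i ∈ Finset.range n, e i) * a with hQ
  have hdist : ∀ m n : ℕ, m ≤ n → dist (S n) (S m) = dist (Q n) (Q m) := by
    intro m n hmn
    rw [dist_eq_norm, dist_eq_norm]
    have h1 : S n - S m = ∑ i ∈ Finset.Ico m n, M.smul (w i) a :=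
      (Finset.sum_Ico_eq_sub _ hmn).symm
    have h2 : Q n - Q m = (∑ i ∈ Finset.Ico m n, e i) * a := by
      rw [hQ]
      simp only
      rw [Finset.sum_Ico_eq_sub _ hmn, sub_mul]
    rw [h1, h2]
    exact hnorm _
  have hQtend : Filter.Tendsto Q Filter.atTop (nhds a) := by
    have h := tendsto_projOp_comp ξ (a.2 : IsCompactOperator ⇑(a : H →L[ℂ] H))
    rw [Metric.tendsto_atTop] at h ⊢
    intro ε hε
    obtain ⟨N, hN⟩ := h ε hε
    refine ⟨N, fun n hn => ?_⟩
    have hval : ((Q n : KH H) : H →L[ℂ] H)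
        = (∑ i ∈ Finset.range n, rankOneOp (ξ i) (ξ i)) ∘L (a : H →L[ℂ] H) := by
      rw [hQ]
      simp only
      rw [MulMemClass.coe_mul, AddSubmonoidClass.coe_finset_sum, ContinuousLinearMap.mul_def]
      rfl
    have hd : dist (Q n) a = dist ((Q n : KH H) : H →L[ℂ] H) ((a : KH H) : H →L[ℂ] H) :=
      Subtype.dist_eq _ _
    rw [hd, hval]
    exact hN n hn
  have hScauchy : CauchySeq S := by
    have hQcauchy := hQtend.cauchySeq
    rw [Metric.cauchySeq_iff] at hQcauchy ⊢
    intro ε hε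
    obtain ⟨N, hN⟩ := hQcauchy ε hε
    refine ⟨N, fun m hm n hn => ?_⟩
    rcases le_total n m with h | h
    · rw [hdist n m h]; exact hN m hm n hn
    · rw [dist_comm, hdist m n h]; exact hN n hn m hm
  obtain ⟨L, hL⟩ := cauchySeq_tendsto_of_complete hScauchy
  refine ⟨L, hL, ?_⟩
  have h2 : Filter.Tendsto (fun n => M.inner (S n) (S n)) Filter.atTop
      (nhds (star a * a)) := by
    have hfe : (fun n => M.inner (S n) (S n)) = fun n => star (Q n) * Q n := by
      funext n
      rw [hS, hQ]
      simp only
      exact hinner_TT (Finset.range n)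
    rw [hfe]
    exact hQtend.star.mul hQtend
  have h1 : Filter.Tendsto (fun n => M.inner (S n) (S n)) Filter.atTop
      (nhds (M.inner L L)) := by
    have hd : Filter.Tendsto (fun n => ‖L - S n‖) Filter.atTop (nhds 0) := by
      have := (tendsto_const_nhds (x := L) (f := (Filter.atTop : Filter ℕ))).sub hL
      simpa using this.norm
    have hbound : ∀ n, ‖M.inner (S n) (S n) - M.inner L L‖
        ≤ 4 * (‖L - S n‖ * ‖L‖) + 4 * ((‖L‖ + ‖L - S n‖) * ‖L - S n‖) := by
      intro n
      have hid : M.inner (S n) (S n) - M.inner L L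
          = -(M.inner (L - S n) L + M.inner (S n) (L - S n)) := by
        rw [M.inner_sub_left', M.inner_sub_right']
        abel
      rw [hid, norm_neg]
      refine (norm_add_le _ _).trans (add_le_add (M.norm_inner_le_four _ _) ?_)
      refine (M.norm_inner_le_four _ _).trans ?_
      have hSn : ‖S n‖ ≤ ‖L‖ + ‖L - S n‖ := by
        have hrw : S n = L - (L - S n) := by abel
        conv_lhs => rw [hrw]
        exact norm_sub_le _ _
      gcongr
    have hbt : Filter.Tendsto
        (fun n => 4 * (‖L - S n‖ * ‖L‖) + 4 * ((‖L‖ + ‖L - S n‖) * ‖L - S n‖))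
        Filter.atTop (nhds 0) := by
      have := ((hd.mul_const ‖L‖).const_mul 4).add
        ((((tendsto_const_nhds (x := ‖L‖)).add hd).mul hd).const_mul 4)
      simpa using this
    have hzero := squeeze_zero (fun n => norm_nonneg _) hbound hbt
    exact tendsto_iff_norm_sub_tendsto_zero.mpr hzero
  exact tendsto_nhds_unique h1 h2
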